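/- For the function h(x) = |x|^(1+δ) with δ ∈ (0,1], its derivative h'(x) = (1+δ)|x|^δ sign(x) satisfies |h'(x) − h'(y)| ≤ 2^(1−δ)(1+δ)|x−y|^δ for all real x, y. -/
import Mathlib

open Real

private lemma gval_nonneg {δ t : ℝ} (hδ0 : 0 < δ) (ht : 0 ≤ t) :
    |t| ^ δ * Real.sign t = t ^ δ := by
  rcases ht.eq_or_lt with h | h
  · simp [← h, Real.sign_zero, Real.zero_rpow hδ0.ne']
  · rw [Real.sign_of_pos h, abs_of_pos h, mul_one]

private lemma gval_nonpos {δ t : ℝ} (hδ0 : 0 < δ) (ht : t ≤ 0) :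
    |t| ^ δ * Real.sign t = -((-t) ^ δ) := by
  rcases ht.eq_or_lt with h | h
  · simp [h, Real.sign_zero, Real.zero_rpow hδ0.ne']
  · rw [Real.sign_of_neg h, abs_of_neg h, mul_neg_one]

private lemma g_mono {δ : ℝ} (hδ0 : 0 < δ) {x y : ℝ} (hxy : y ≤ x) :
    |y| ^ δ * Real.sign y ≤ |x| ^ δ * Real.sign x := by
  rcases le_or_gt 0 y with hy | hy
  · rw [gval_nonneg hδ0 hy, gval_nonneg hδ0 (hy.trans hxy)]
    exact Real.rpow_le_rpow hy hxy hδ0.le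
  rcases le_or_gt x 0 with hx | hx
  · rw [gval_nonpos hδ0 hy.le, gval_nonpos hδ0 hx]
    exact neg_le_neg (Real.rpow_le_rpow (by linarith) (by linarith) hδ0.le)
  · rw [gval_nonpos hδ0 hy.le, gval_nonneg hδ0 hx.le]
    have h1 : (0:ℝ) ≤ (-y) ^ δ := Real.rpow_nonneg (by linarith) _
    have h2 : (0:ℝ) ≤ x ^ δ := Real.rpow_nonneg hx.le _
    linarith

private lemma subadd {δ a b : ℝ} (hδ0 : 0 < δ) (hδ1 : δ ≤ 1) (ha : 0 ≤ a) (hb : 0 ≤ b) :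
    (a + b) ^ δ ≤ a ^ δ + b ^ δ := by
  have h := NNReal.rpow_add_le_add_rpow a.toNNReal b.toNNReal hδ0.le hδ1
  have h' := NNReal.coe_le_coe.2 h
  push_cast [Real.coe_toNNReal a ha, Real.coe_toNNReal b hb] at h'
  exact h'

private lemma powmean {δ a b : ℝ} (hδ0 : 0 < δ) (hδ1 : δ ≤ 1) (ha : 0 ≤ a) (hb : 0 ≤ b) :
    a ^ δ + b ^ δ ≤ 2 ^ (1 - δ) * (a + b) ^ δ := by
  have hc := (Real.concaveOn_rpow hδ0.le hδ1).2 (Set.mem_Ici.2 ha) (Set.mem_Ici.2 hb)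
    (by norm_num : (0:ℝ) ≤ 1/2) (by norm_num : (0:ℝ) ≤ 1/2) (by norm_num)
  simp only [smul_eq_mul] at hc
  have heq : ((1:ℝ)/2 * a + 1/2 * b) ^ δ = (a + b) ^ δ / 2 ^ δ := by
    rw [show (1:ℝ)/2 * a + 1/2 * b = (a+b)/2 by ring,
      Real.div_rpow (by linarith) (by norm_num)]
  rw [heq] at hc
  have h2 : (2:ℝ) ^ (1 - δ) = 2 / 2 ^ δ := by
    rw [Real.rpow_sub (by norm_num), Real.rpow_one]
  rw [h2]
  have hpos : (0:ℝ) < 2 ^ δ := Real.rpow_pos_of_pos (by norm_num) _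
  rw [div_mul_eq_mul_div, le_div_iff₀ hpos]
  nlinarith [(le_div_iff₀ hpos).1 hc]

private lemma key {δ : ℝ} (hδ0 : 0 < δ) (hδ1 : δ ≤ 1) {x y : ℝ} (hxy : y ≤ x) :
    |x| ^ δ * Real.sign x - |y| ^ δ * Real.sign y ≤ 2 ^ (1 - δ) * (x - y) ^ δ := by
  have hone : (1:ℝ) ≤ 2 ^ (1 - δ) := by
    calc (1:ℝ) = 2 ^ (0:ℝ) := by rw [Real.rpow_zero]
    _ ≤ 2 ^ (1 - δ) := Real.rpow_le_rpow_of_exponent_le (by norm_num) (by linarith)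
  have hsub : (0:ℝ) ≤ x - y := by linarith
  have hsp : (0:ℝ) ≤ (x - y) ^ δ := Real.rpow_nonneg hsub _
  rcases le_or_gt 0 y with hy | hy
  · rw [gval_nonneg hδ0 hy, gval_nonneg hδ0 (hy.trans hxy)]
    have h1 : x ^ δ ≤ (x - y) ^ δ + y ^ δ := by
      have := subadd hδ0 hδ1 hsub hy
      rwa [sub_add_cancel] at this
    nlinarith
  rcases le_or_gt x 0 with hx | hx
  · rw [gval_nonpos hδ0 hy.le, gval_nonpos hδ0 hx]
    have h1 : (-y) ^ δ ≤ (x - y) ^ δ + (-x) ^ δ := by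
      have := subadd hδ0 hδ1 hsub (by linarith : (0:ℝ) ≤ -x)
      rwa [show x - y + -x = -y by ring] at this
    nlinarith
  · rw [gval_nonpos hδ0 hy.le, gval_nonneg hδ0 hx.le]
    have h1 := powmean hδ0 hδ1 hx.le (by linarith : (0:ℝ) ≤ -y)
    rw [show x + -y = x - y by ring] at h1
    linarith

theorem holder_deriv_abs_rpow (δ : ℝ) (hδ0 : 0 < δ) (hδ1 : δ ≤ 1) (x y : ℝ) :
    |(1 + δ) * |x| ^ δ * Real.sign x - (1 + δ) * |y| ^ δ * Real.sign y|
      ≤ 2 ^ (1 - δ) * (1 + δ) * |x - y| ^ δ := by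
  have hd : (0:ℝ) ≤ 1 + δ := by linarith
  wlog hxy : y ≤ x generalizing x y
  · have := this y x (by linarith)
    simpa [abs_sub_comm] using this
  have hm := g_mono hδ0 hxy
  have hk := key hδ0 hδ1 hxy
  rw [show (1 + δ) * |x| ^ δ * Real.sign x - (1 + δ) * |y| ^ δ * Real.sign y
      = (1 + δ) * (|x| ^ δ * Real.sign x - |y| ^ δ * Real.sign y) by ring,
    abs_of_nonneg (by nlinarith), abs_of_nonneg (show (0:ℝ) ≤ x - y by linarith)]
  nlinarith [Real.rpow_nonneg (show (0:ℝ) ≤ x - y by linarith) δ]
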